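/- A group G is circularly orderable if and only if for every finite subset X of G there exists a surjective homomorphism φ from ⟨X⟩ onto a circularly orderable group such that the subgroup generated by X^{-1}X ∩ ker(φ) is left-orderable. -/

import Mathlib

/-- `c` is a (left-invariant) circular ordering of `G`. -/
def IsCircularOrdering {G : Type*} [Group G] (c : G → G → G → ℤ) : Prop :=
  (∀ x y z : G, c x y z = 0 ∨ c x y z = 1 ∨ c x y z = -1) ∧
  (∀ x y z : G, c x y z = 0 ↔ (x = y ∨ x = z ∨ y = z)) ∧
  (∀ x₁ x₂ x₃ x₄ : G, c x₁ x₂ x₃ - c x₁ x₂ x₄ + c x₁ x₃ x₄ - c x₂ x₃ x₄ = 0) ∧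
  (∀ g x y z : G, c (g * x) (g * y) (g * z) = c x y z)

/-- A group is circularly orderable if it admits a circular ordering. -/
def CircularlyOrderable (G : Type*) [Group G] : Prop :=
  ∃ c : G → G → G → ℤ, IsCircularOrdering c

/-- A group is left-orderable if it admits a strict total order invariant under
left multiplication. -/
def LeftOrderable (G : Type*) [Group G] : Prop :=
  ∃ r : G → G → Prop, IsStrictTotalOrder G r ∧ ∀ f g h : G, r g h → r (f * g) (f * h)

/-- `G` is circularly orderable iff for each finite `X ⊆ G` there is a surjection
`φ : ⟨X⟩ → C` onto a circularly orderable group such that the subgroup generated by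
`X⁻¹X ∩ ker φ` is left-orderable. -/
def TriZ (a b c : ℤ) : Prop :=
  (a = 1 → b = 1 → c = 1) ∧ (a = -1 → b = -1 → c = -1) ∧ (a = 0 → c = b) ∧ (b = 0 → c = a)

lemma tri3 (a b c : ℤ) (ha : a = 0 ∨ a = 1 ∨ a = -1) (hb : b = 0 ∨ b = 1 ∨ b = -1)
    (hc : c = 0 ∨ c = 1 ∨ c = -1) (t : TriZ a b c) : a * b * c - a + c - b = 0 := by
  obtain ⟨t1, t2, t3, t4⟩ := t
  rcases ha with rfl|rfl|rfl <;> rcases hb with rfl|rfl|rfl <;> rcases hc with rfl|rfl|rfl <;>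
    omega

set_option maxHeartbeats 4000000 in
lemma quadZ (s12 s13 s14 s23 s24 s34 : ℤ)
    (h12 : s12 = 0 ∨ s12 = 1 ∨ s12 = -1) (h13 : s13 = 0 ∨ s13 = 1 ∨ s13 = -1)
    (h14 : s14 = 0 ∨ s14 = 1 ∨ s14 = -1) (h23 : s23 = 0 ∨ s23 = 1 ∨ s23 = -1)
    (h24 : s24 = 0 ∨ s24 = 1 ∨ s24 = -1) (h34 : s34 = 0 ∨ s34 = 1 ∨ s34 = -1)
    (t1 : TriZ s12 s23 s13) (t2 : TriZ s23 s34 s24) (t3 : TriZ s12 s24 s14)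
    (t4 : TriZ s13 s34 s14) :
    s12 * s23 * s13 - s12 * s24 * s14 + s13 * s34 * s14 - s23 * s34 * s24 = 0 := by
  obtain ⟨a1, a2, a3, a4⟩ := t1
  obtain ⟨b1, b2, b3, b4⟩ := t2
  obtain ⟨c1, c2, c3, c4⟩ := t3
  obtain ⟨d1, d2, d3, d4⟩ := t4
  rcases h12 with rfl|rfl|rfl <;> rcases h23 with rfl|rfl|rfl <;> rcases h34 with rfl|rfl|rfl <;>
    rcases h13 with rfl|rfl|rfl <;> rcases h24 with rfl|rfl|rfl <;> rcases h14 with rfl|rfl|rfl <;>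
    omega

section Sgn

open Classical in
/-- sign of an element w.r.t. a left order `r` on a subgroup `K`; junk value `1` off `K`. -/
noncomputable def lsgn {H : Type*} [Group H] (K : Subgroup H) (r : K → K → Prop) (k : H) : ℤ :=
  if k = 1 then 0 else if hk : k ∈ K then (if r 1 ⟨k, hk⟩ then 1 else -1) else 1

variable {H : Type*} [Group H] {K : Subgroup H} {r : K → K → Prop}

lemma lsgn_eq_zero_iff (k : H) : lsgn K r k = 0 ↔ k = 1 := by
  unfold lsgn; split_ifs <;> simp_all

lemma lsgn_mem (k : H) : lsgn K r k = 0 ∨ lsgn K r k = 1 ∨ lsgn K r k = -1 := by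
  unfold lsgn; split_ifs <;> simp

variable (hto : IsStrictTotalOrder (↥K) r) (hinv : ∀ f g h : K, r g h → r (f * g) (f * h))

section
include hto

lemma lsgn_eq_one_iff {k : H} (hk : k ∈ K) : lsgn K r k = 1 ↔ r 1 ⟨k, hk⟩ := by
  unfold lsgn
  split_ifs with h1 h2
  · subst h1
    have : (⟨(1 : H), hk⟩ : K) = 1 := rfl
    rw [this]
    simp only [show (0 : ℤ) ≠ 1 from by omega, false_iff]
    exact hto.irrefl 1
  · simpa using h2
  · simp only [show (-1 : ℤ) ≠ 1 from by omega, false_iff]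
    assumption

lemma lsgn_eq_negone_iff {k : H} (hk : k ∈ K) : lsgn K r k = -1 ↔ r ⟨k, hk⟩ 1 := by
  have hasym : ∀ a b : K, r a b → ¬ r b a := fun a b h h' => hto.irrefl a (hto.trans _ _ _ h h')
  unfold lsgn
  split_ifs with h1 h2
  · subst h1
    have : (⟨(1 : H), hk⟩ : K) = 1 := rfl
    rw [this]
    simp only [show (0 : ℤ) ≠ -1 from by omega, false_iff]
    exact hto.irrefl 1
  · simp only [show (1 : ℤ) ≠ -1 from by omega, false_iff]
    exact hasym _ _ h2
  · simp only [eq_self_iff_true, true_iff]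
    rcases (show r 1 ⟨k, hk⟩ ∨ (1 : K) = ⟨k, hk⟩ ∨ r ⟨k, hk⟩ 1 from open Classical in
      if ha : r 1 ⟨k, hk⟩ then Or.inl ha else if hb : r ⟨k, hk⟩ 1 then Or.inr (Or.inr hb)
      else Or.inr (Or.inl (hto.trichotomous 1 ⟨k, hk⟩ ha hb))) with h | h | h
    · exact absurd h h2
    · exact absurd (by simpa [Subtype.ext_iff] using h.symm) h1
    · exact h

end

include hto hinv in
lemma lsgn_tri {k l : H} (hk : k ∈ K) (hl : l ∈ K) :
    TriZ (lsgn K r k) (lsgn K r l) (lsgn K r (k * l)) := by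
  have hkl : k * l ∈ K := mul_mem hk hl
  have hmul : (⟨k, hk⟩ : K) * ⟨l, hl⟩ = ⟨k * l, hkl⟩ := rfl
  refine ⟨?_, ?_, ?_, ?_⟩
  · intro h1 h2
    rw [lsgn_eq_one_iff hto hk] at h1
    rw [lsgn_eq_one_iff hto hl] at h2
    rw [lsgn_eq_one_iff hto hkl]
    have := hinv ⟨k, hk⟩ _ _ h2
    rw [mul_one, hmul] at this
    exact hto.trans _ _ _ h1 this
  · intro h1 h2
    rw [lsgn_eq_negone_iff hto hk] at h1
    rw [lsgn_eq_negone_iff hto hl] at h2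
    rw [lsgn_eq_negone_iff hto hkl]
    have := hinv ⟨k, hk⟩ _ _ h2
    rw [mul_one, hmul] at this
    exact hto.trans _ _ _ this h1
  · intro h1
    rw [lsgn_eq_zero_iff] at h1
    subst h1; rw [one_mul]
  · intro h1
    rw [lsgn_eq_zero_iff] at h1
    subst h1; rw [mul_one]

end Sgn
section CC
variable {C : Type*} [Group C] {cC : C → C → C → ℤ}

lemma cc_swap12 (h : IsCircularOrdering cC) (x y z : C) : cC y x z = -cC x y z := by
  have h4 := h.2.2.1 x y x z
  have e1 : cC x y x = 0 := (h.2.1 x y x).2 (Or.inr (Or.inl rfl))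
  have e2 : cC x x z = 0 := (h.2.1 x x z).2 (Or.inl rfl)
  omega

lemma cc_swap23 (h : IsCircularOrdering cC) (x y z : C) : cC x z y = -cC x y z := by
  have h4 := h.2.2.1 x y z y
  have e1 : cC x y y = 0 := (h.2.1 x y y).2 (Or.inr (Or.inr rfl))
  have e2 : cC y z y = 0 := (h.2.1 y z y).2 (Or.inr (Or.inl rfl))
  omega

lemma cc_rot (h : IsCircularOrdering cC) (x y z : C) : cC y z x = cC x y z := by
  have e1 := cc_swap12 h y z x
  have e2 := cc_swap23 h z y x
  have e3 := cc_swap12 h x z y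
  have e4 := cc_swap23 h x y z
  omega

end CC

section CFun

variable {H : Type*} [Group H] {C : Type*} [Group C]

open Classical in
/-- the lexicographic circular-order candidate on `H` built from `φ : H →* C`,
a circular ordering `cC` on `C` and a left order `r` on a subgroup `K`. -/
noncomputable def cfun (φ : H →* C) (cC : C → C → C → ℤ) (K : Subgroup H)
    (r : K → K → Prop) (x y z : H) : ℤ :=
  if φ x = φ y then
    if φ y = φ z then lsgn K r (x⁻¹ * y) * lsgn K r (y⁻¹ * z) * lsgn K r (x⁻¹ * z)
    else lsgn K r (x⁻¹ * y)
  else if φ x = φ z then -lsgn K r (x⁻¹ * z)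
  else if φ y = φ z then lsgn K r (y⁻¹ * z)
  else cC (φ x) (φ y) (φ z)

variable {φ : H →* C} {cC : C → C → C → ℤ} {K : Subgroup H} {r : K → K → Prop}

lemma cfun_eval_A {x y z : H} (h1 : φ x = φ y) (h2 : φ y = φ z) :
    cfun φ cC K r x y z = lsgn K r (x⁻¹ * y) * lsgn K r (y⁻¹ * z) * lsgn K r (x⁻¹ * z) := by
  unfold cfun; rw [if_pos h1, if_pos h2]

lemma cfun_eval_B {x y z : H} (h1 : φ x = φ y) (h2 : ¬ φ y = φ z) :
    cfun φ cC K r x y z = lsgn K r (x⁻¹ * y) := by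
  unfold cfun; rw [if_pos h1, if_neg h2]

lemma cfun_eval_C {x y z : H} (h1 : ¬ φ x = φ y) (h2 : φ x = φ z) :
    cfun φ cC K r x y z = -lsgn K r (x⁻¹ * z) := by
  unfold cfun; rw [if_neg h1, if_pos h2]

lemma cfun_eval_D {x y z : H} (h1 : ¬ φ x = φ y) (h2 : ¬ φ x = φ z) (h3 : φ y = φ z) :
    cfun φ cC K r x y z = lsgn K r (y⁻¹ * z) := by
  unfold cfun; rw [if_neg h1, if_neg h2, if_pos h3]

lemma cfun_eval_E {x y z : H} (h1 : ¬ φ x = φ y) (h2 : ¬ φ x = φ z) (h3 : ¬ φ y = φ z) :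
    cfun φ cC K r x y z = cC (φ x) (φ y) (φ z) := by
  unfold cfun; rw [if_neg h1, if_neg h2, if_neg h3]
lemma cfun_inv (hcC : IsCircularOrdering cC) (g x y z : H) :
    cfun φ cC K r (g * x) (g * y) (g * z) = cfun φ cC K r x y z := by
  have e1 : (g * x)⁻¹ * (g * y) = x⁻¹ * y := by group
  have e2 : (g * y)⁻¹ * (g * z) = y⁻¹ * z := by group
  have e3 : (g * x)⁻¹ * (g * z) = x⁻¹ * z := by group
  have q1 : (φ (g * x) = φ (g * y)) ↔ (φ x = φ y) := by
    simp only [map_mul, mul_right_inj]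
  have q2 : (φ (g * y) = φ (g * z)) ↔ (φ y = φ z) := by
    simp only [map_mul, mul_right_inj]
  have q3 : (φ (g * x) = φ (g * z)) ↔ (φ x = φ z) := by
    simp only [map_mul, mul_right_inj]
  by_cases h1 : φ x = φ y
  · by_cases h2 : φ y = φ z
    · rw [cfun_eval_A (q1.mpr h1) (q2.mpr h2), cfun_eval_A h1 h2, e1, e2, e3]
    · rw [cfun_eval_B (q1.mpr h1) (fun h => h2 (q2.mp h)), cfun_eval_B h1 h2, e1]
  · by_cases h3 : φ x = φ z
    · rw [cfun_eval_C (fun h => h1 (q1.mp h)) (q3.mpr h3), cfun_eval_C h1 h3, e3]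
    · by_cases h4 : φ y = φ z
      · rw [cfun_eval_D (fun h => h1 (q1.mp h)) (fun h => h3 (q3.mp h)) (q2.mpr h4),
          cfun_eval_D h1 h3 h4, e2]
      · rw [cfun_eval_E (fun h => h1 (q1.mp h)) (fun h => h3 (q3.mp h))
          (fun h => h4 (q2.mp h)), cfun_eval_E h1 h3 h4]
        simp only [map_mul]
        exact hcC.2.2.2 (φ g) _ _ _

lemma cfun_mem (hcC : IsCircularOrdering cC) (x y z : H) :
    cfun φ cC K r x y z = 0 ∨ cfun φ cC K r x y z = 1 ∨ cfun φ cC K r x y z = -1 := by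
  unfold cfun
  split_ifs
  · rcases lsgn_mem (K := K) (r := r) (x⁻¹ * y) with h1|h1|h1 <;>
    rcases lsgn_mem (K := K) (r := r) (y⁻¹ * z) with h2|h2|h2 <;>
    rcases lsgn_mem (K := K) (r := r) (x⁻¹ * z) with h3|h3|h3 <;>
      rw [h1, h2, h3] <;> norm_num
  · exact lsgn_mem _
  · rcases lsgn_mem (K := K) (r := r) (x⁻¹ * z) with h|h|h <;> rw [h] <;> norm_num
  · exact lsgn_mem _
  · exact hcC.1 _ _ _

lemma cfun_zero_iff (hcC : IsCircularOrdering cC) (x y z : H) :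
    cfun φ cC K r x y z = 0 ↔ (x = y ∨ x = z ∨ y = z) := by
  by_cases h1 : φ x = φ y
  · by_cases h2 : φ y = φ z
    · rw [cfun_eval_A h1 h2]
      simp only [mul_eq_zero, lsgn_eq_zero_iff, inv_mul_eq_one]
      tauto
    · have hxz : x ≠ z := fun e => h2 (h1.symm.trans (by rw [e]))
      have hyz : y ≠ z := fun e => h2 (by rw [e])
      rw [cfun_eval_B h1 h2]
      simp only [lsgn_eq_zero_iff, inv_mul_eq_one]
      tauto
  · have hxy : x ≠ y := fun e => h1 (by rw [e])
    by_cases h3 : φ x = φ z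
    · have hyz : y ≠ z := fun e => h1 (h3.trans (by rw [e]))
      rw [cfun_eval_C h1 h3]
      simp only [neg_eq_zero, lsgn_eq_zero_iff, inv_mul_eq_one]
      tauto
    · have hxz : x ≠ z := fun e => h3 (by rw [e])
      by_cases h4 : φ y = φ z
      · rw [cfun_eval_D h1 h3 h4]
        simp only [lsgn_eq_zero_iff, inv_mul_eq_one]
        tauto
      · have hyz : y ≠ z := fun e => h4 (by rw [e])
        rw [cfun_eval_E h1 h3 h4, hcC.2.1]
        tauto

lemma cfun_cocycle (hcC : IsCircularOrdering cC)
    (hto : IsStrictTotalOrder (↥K) r) (hinv : ∀ f g h : K, r g h → r (f * g) (f * h))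
    (x1 x2 x3 x4 : H)
    (g12 : φ x1 = φ x2 → x1⁻¹ * x2 ∈ K) (g13 : φ x1 = φ x3 → x1⁻¹ * x3 ∈ K)
    (g14 : φ x1 = φ x4 → x1⁻¹ * x4 ∈ K) (g23 : φ x2 = φ x3 → x2⁻¹ * x3 ∈ K)
    (g24 : φ x2 = φ x4 → x2⁻¹ * x4 ∈ K) (g34 : φ x3 = φ x4 → x3⁻¹ * x4 ∈ K) :
    cfun φ cC K r x1 x2 x3 - cfun φ cC K r x1 x2 x4 + cfun φ cC K r x1 x3 x4
      - cfun φ cC K r x2 x3 x4 = 0 := by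
  have m123 : (x1⁻¹ * x2) * (x2⁻¹ * x3) = x1⁻¹ * x3 := by group
  have m124 : (x1⁻¹ * x2) * (x2⁻¹ * x4) = x1⁻¹ * x4 := by group
  have m134 : (x1⁻¹ * x3) * (x3⁻¹ * x4) = x1⁻¹ * x4 := by group
  have m234 : (x2⁻¹ * x3) * (x3⁻¹ * x4) = x2⁻¹ * x4 := by group
  by_cases h12 : φ x1 = φ x2
  · by_cases h13 : φ x1 = φ x3
    · have h23 : φ x2 = φ x3 := h12.symm.trans h13
      by_cases h14 : φ x1 = φ x4
      · -- all four in the same fiber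
        have h24 : φ x2 = φ x4 := h12.symm.trans h14
        have h34 : φ x3 = φ x4 := h13.symm.trans h14
        have k12 := g12 h12; have k13 := g13 h13; have k14 := g14 h14
        have k23 := g23 h23; have k24 := g24 h24; have k34 := g34 h34
        rw [cfun_eval_A h12 h23, cfun_eval_A h12 h24, cfun_eval_A h13 h34, cfun_eval_A h23 h34]
        have T1 : TriZ (lsgn K r (x1⁻¹ * x2)) (lsgn K r (x2⁻¹ * x3)) (lsgn K r (x1⁻¹ * x3)) := by
          have := lsgn_tri hto hinv k12 k23; rwa [m123] at this
        have T2 : TriZ (lsgn K r (x2⁻¹ * x3)) (lsgn K r (x3⁻¹ * x4)) (lsgn K r (x2⁻¹ * x4)) := by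
          have := lsgn_tri hto hinv k23 k34; rwa [m234] at this
        have T3 : TriZ (lsgn K r (x1⁻¹ * x2)) (lsgn K r (x2⁻¹ * x4)) (lsgn K r (x1⁻¹ * x4)) := by
          have := lsgn_tri hto hinv k12 k24; rwa [m124] at this
        have T4 : TriZ (lsgn K r (x1⁻¹ * x3)) (lsgn K r (x3⁻¹ * x4)) (lsgn K r (x1⁻¹ * x4)) := by
          have := lsgn_tri hto hinv k13 k34; rwa [m134] at this
        have q := quadZ _ _ _ _ _ _ (lsgn_mem _) (lsgn_mem _) (lsgn_mem _) (lsgn_mem _)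
          (lsgn_mem _) (lsgn_mem _) T1 T2 T3 T4
        linarith [q]
      · -- {1,2,3} together, 4 apart
        have n24 : ¬ φ x2 = φ x4 := fun h => h14 (h12.trans h)
        have n34 : ¬ φ x3 = φ x4 := fun h => h14 (h13.trans h)
        have k12 := g12 h12; have k13 := g13 h13; have k23 := g23 h23
        rw [cfun_eval_A h12 h23, cfun_eval_B h12 n24, cfun_eval_B h13 n34, cfun_eval_B h23 n34]
        have T1 : TriZ (lsgn K r (x1⁻¹ * x2)) (lsgn K r (x2⁻¹ * x3)) (lsgn K r (x1⁻¹ * x3)) := by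
          have := lsgn_tri hto hinv k12 k23; rwa [m123] at this
        have q := tri3 _ _ _ (lsgn_mem _) (lsgn_mem _) (lsgn_mem _) T1
        linarith [q]
    · by_cases h14 : φ x1 = φ x4
      · -- {1,2,4} together, 3 apart
        have h24 : φ x2 = φ x4 := h12.symm.trans h14
        have n23 : ¬ φ x2 = φ x3 := fun h => h13 (h12.trans h)
        have n34 : ¬ φ x3 = φ x4 := fun h => h13 (h14.trans h.symm)
        have k12 := g12 h12; have k14 := g14 h14; have k24 := g24 h24
        rw [cfun_eval_B h12 n23, cfun_eval_A h12 h24, cfun_eval_C h13 h14,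
          cfun_eval_C n23 h24]
        have T3 : TriZ (lsgn K r (x1⁻¹ * x2)) (lsgn K r (x2⁻¹ * x4)) (lsgn K r (x1⁻¹ * x4)) := by
          have := lsgn_tri hto hinv k12 k24; rwa [m124] at this
        have q := tri3 _ _ _ (lsgn_mem _) (lsgn_mem _) (lsgn_mem _) T3
        linarith [q]
      · by_cases h34 : φ x3 = φ x4
        · -- {1,2} and {3,4}
          have n23 : ¬ φ x2 = φ x3 := fun h => h13 (h12.trans h)
          have n24 : ¬ φ x2 = φ x4 := fun h => h14 (h12.trans h)
          rw [cfun_eval_B h12 n23, cfun_eval_B h12 n24, cfun_eval_D h13 h14 h34,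
            cfun_eval_D n23 n24 h34]
          ring
        · -- {1,2}, {3}, {4}
          have n23 : ¬ φ x2 = φ x3 := fun h => h13 (h12.trans h)
          have n24 : ¬ φ x2 = φ x4 := fun h => h14 (h12.trans h)
          rw [cfun_eval_B h12 n23, cfun_eval_B h12 n24, cfun_eval_E h13 h14 h34,
            cfun_eval_E n23 n24 h34, h12]
          ring
  · by_cases h13 : φ x1 = φ x3
    · by_cases h14 : φ x1 = φ x4
      · -- {1,3,4} together, 2 apart
        have h34 : φ x3 = φ x4 := h13.symm.trans h14
        have n23 : ¬ φ x2 = φ x3 := fun h => h12 (h13.trans h.symm)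
        have n24 : ¬ φ x2 = φ x4 := fun h => h12 (h14.trans h.symm)
        have k13 := g13 h13; have k14 := g14 h14; have k34 := g34 h34
        rw [cfun_eval_C h12 h13, cfun_eval_C h12 h14, cfun_eval_A h13 h34,
          cfun_eval_D n23 n24 h34]
        have T4 : TriZ (lsgn K r (x1⁻¹ * x3)) (lsgn K r (x3⁻¹ * x4)) (lsgn K r (x1⁻¹ * x4)) := by
          have := lsgn_tri hto hinv k13 k34; rwa [m134] at this
        have q := tri3 _ _ _ (lsgn_mem _) (lsgn_mem _) (lsgn_mem _) T4
        linarith [q]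
      · by_cases h24 : φ x2 = φ x4
        · -- {1,3} and {2,4}
          have n23 : ¬ φ x2 = φ x3 := fun h => h12 (h13.trans h.symm)
          have n34 : ¬ φ x3 = φ x4 := fun h => h14 (h13.trans h)
          rw [cfun_eval_C h12 h13, cfun_eval_D h12 h14 h24, cfun_eval_B h13 n34,
            cfun_eval_C n23 h24]
          ring
        · -- {1,3}, {2}, {4}
          have n23 : ¬ φ x2 = φ x3 := fun h => h12 (h13.trans h.symm)
          have n34 : ¬ φ x3 = φ x4 := fun h => h14 (h13.trans h)
          rw [cfun_eval_C h12 h13, cfun_eval_E h12 h14 h24, cfun_eval_B h13 n34,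
            cfun_eval_E n23 h24 n34]
          have e : cC (φ x2) (φ x3) (φ x4) = -cC (φ x1) (φ x2) (φ x4) := by
            rw [h13, cc_swap12 hcC]
          rw [e]; ring
    · by_cases h14 : φ x1 = φ x4
      · by_cases h23 : φ x2 = φ x3
        · -- {1,4} and {2,3}
          have n24 : ¬ φ x2 = φ x4 := fun h => h12 (h14.trans h.symm)
          have n34 : ¬ φ x3 = φ x4 := fun h => h13 (h14.trans h.symm)
          rw [cfun_eval_D h12 h13 h23, cfun_eval_C h12 h14, cfun_eval_C h13 h14,
            cfun_eval_B h23 n34]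
          ring
        · -- {1,4}, {2}, {3}
          have n24 : ¬ φ x2 = φ x4 := fun h => h12 (h14.trans h.symm)
          have n34 : ¬ φ x3 = φ x4 := fun h => h13 (h14.trans h.symm)
          rw [cfun_eval_E h12 h13 h23, cfun_eval_C h12 h14, cfun_eval_C h13 h14,
            cfun_eval_E h23 n24 n34]
          have e : cC (φ x2) (φ x3) (φ x4) = cC (φ x1) (φ x2) (φ x3) := by
            rw [← h14, cc_rot hcC]
          rw [e]; ring
      · by_cases h23 : φ x2 = φ x3
        · by_cases h24 : φ x2 = φ x4
          · -- {2,3,4} together, 1 apart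
            have h34 : φ x3 = φ x4 := h23.symm.trans h24
            have k23 := g23 h23; have k24 := g24 h24; have k34 := g34 h34
            rw [cfun_eval_D h12 h13 h23, cfun_eval_D h12 h14 h24, cfun_eval_D h13 h14 h34,
              cfun_eval_A h23 h34]
            have T2 : TriZ (lsgn K r (x2⁻¹ * x3)) (lsgn K r (x3⁻¹ * x4))
                (lsgn K r (x2⁻¹ * x4)) := by
              have := lsgn_tri hto hinv k23 k34; rwa [m234] at this
            have q := tri3 _ _ _ (lsgn_mem _) (lsgn_mem _) (lsgn_mem _) T2
            linarith [q]
          · -- {2,3}, {1}, {4}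
            have n34 : ¬ φ x3 = φ x4 := fun h => h24 (h23.trans h)
            rw [cfun_eval_D h12 h13 h23, cfun_eval_E h12 h14 h24, cfun_eval_E h13 h14 n34,
              cfun_eval_B h23 n34]
            have e : cC (φ x1) (φ x3) (φ x4) = cC (φ x1) (φ x2) (φ x4) := by rw [h23]
            rw [e]; ring
        · by_cases h24 : φ x2 = φ x4
          · -- {2,4}, {1}, {3}
            have n34 : ¬ φ x3 = φ x4 := fun h => h23 (h24.trans h.symm)
            rw [cfun_eval_E h12 h13 h23, cfun_eval_D h12 h14 h24, cfun_eval_E h13 h14 n34,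
              cfun_eval_C h23 h24]
            have e : cC (φ x1) (φ x3) (φ x4) = -cC (φ x1) (φ x2) (φ x3) := by
              rw [← h24, cc_swap23 hcC]
            rw [e]; ring
          · by_cases h34 : φ x3 = φ x4
            · -- {3,4}, {1}, {2}
              rw [cfun_eval_E h12 h13 h23, cfun_eval_E h12 h14 h24, cfun_eval_D h13 h14 h34,
                cfun_eval_D h23 h24 h34]
              have e : cC (φ x1) (φ x2) (φ x4) = cC (φ x1) (φ x2) (φ x3) := by rw [h34]
              rw [e]; ring
            · -- all fibers distinct
              rw [cfun_eval_E h12 h13 h23, cfun_eval_E h12 h14 h24, cfun_eval_E h13 h14 h34,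
                cfun_eval_E h23 h24 h34]
              exact hcC.2.2.1 (φ x1) (φ x2) (φ x3) (φ x4)

end CFun

theorem circularlyOrderable_iff_leftOrderable_kernel {G : Type u} [Group G] :
    CircularlyOrderable G ↔
      ∀ X : Finset G,
        ∃ (C : Type u) (_ : Group C) (φ : Subgroup.closure (X : Set G) →* C),
          Function.Surjective φ ∧ CircularlyOrderable C ∧
          LeftOrderable
            (Subgroup.closure
              {g : Subgroup.closure (X : Set G) |
                (∃ x ∈ X, ∃ y ∈ X, (g : G) = x⁻¹ * y) ∧ g ∈ φ.ker}) := by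
  constructor
  · -- forward: restrict the circular order, take the identity map
    rintro ⟨c, hc⟩ X
    refine ⟨↥(Subgroup.closure (X : Set G)), inferInstance,
      MonoidHom.id _, Function.surjective_id, ?_, ?_⟩
    · refine ⟨fun x y z => c ↑x ↑y ↑z, fun x y z => hc.1 _ _ _, ?_, fun x₁ x₂ x₃ x₄ => hc.2.2.1 _ _ _ _,
        fun g x y z => hc.2.2.2 ↑g ↑x ↑y ↑z⟩
      intro x y z
      rw [hc.2.1]
      constructor
      · rintro (h | h | h)
        · exact Or.inl (Subtype.coe_injective h)
        · exact Or.inr (Or.inl (Subtype.coe_injective h))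
        · exact Or.inr (Or.inr (Subtype.coe_injective h))
      · rintro (rfl | rfl | rfl)
        · exact Or.inl rfl
        · exact Or.inr (Or.inl rfl)
        · exact Or.inr (Or.inr rfl)
    · -- the relevant subgroup is trivial, hence left-orderable
      set S := {g : Subgroup.closure (X : Set G) |
        (∃ x ∈ X, ∃ y ∈ X, (g : G) = x⁻¹ * y) ∧ g ∈ (MonoidHom.id _).ker} with hS
      have hbot : Subgroup.closure S ≤ ⊥ := by
        rw [Subgroup.closure_le]
        intro g hg
        rw [SetLike.mem_coe, Subgroup.mem_bot]
        exact hg.2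
      have hsub : ∀ a b : ↥(Subgroup.closure S), a = b := by
        intro a b
        have ha := Subgroup.mem_bot.1 (hbot a.2)
        have hb := Subgroup.mem_bot.1 (hbot b.2)
        exact Subtype.ext (ha.trans hb.symm)
      refine ⟨fun _ _ => False, ?_, fun _ _ _ h => h.elim⟩
      haveI i1 : IsTrichotomous _ (fun (_ _ : ↥(Subgroup.closure S)) => False) :=
        ⟨fun a b _ _ => hsub a b⟩
      haveI i2 : IsIrrefl _ (fun (_ _ : ↥(Subgroup.closure S)) => False) := ⟨fun _ h => h⟩
      haveI i3 : IsTrans _ (fun (_ _ : ↥(Subgroup.closure S)) => False) :=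
        ⟨fun _ _ _ h _ => h.elim⟩
      haveI i4 : IsStrictOrder _ (fun (_ _ : ↥(Subgroup.closure S)) => False) := ⟨⟩
      exact ⟨⟩
  · -- backward: compactness over finite subsets
    intro hyp
    classical
    -- Step 1: local data
    have key : ∀ F : Finset G, ∃ d : G → G → ℤ,
        (∀ a b, d a b = 0 ∨ d a b = 1 ∨ d a b = -1) ∧
        (∀ a b, (d a b = 0 ↔ (a = 1 ∨ b = 1 ∨ a = b))) ∧
        (∀ a b e, a ∈ F → b ∈ F → e ∈ F →
          d a b - d a e + d b e - d (a⁻¹ * b) (a⁻¹ * e) = 0) := by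
      intro F
      set X : Finset G := insert 1 F with hXdef
      obtain ⟨C, instC, φ, -, ⟨cC, hcC⟩, r, hto, hinv⟩ := hyp X
      have hmem : ∀ a ∈ X, a ∈ Subgroup.closure (X : Set G) := fun a ha =>
        Subgroup.subset_closure (Finset.mem_coe.2 ha)
      have h1X : (1 : G) ∈ X := Finset.mem_insert_self 1 F
      have good : ∀ (u v : G) (hu : u ∈ X) (hv : v ∈ X)
          (huc : u ∈ Subgroup.closure (X : Set G)) (hvc : v ∈ Subgroup.closure (X : Set G)),
          φ ⟨u, huc⟩ = φ ⟨v, hvc⟩ → (⟨u, huc⟩ : Subgroup.closure (X : Set G))⁻¹ * ⟨v, hvc⟩ ∈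
            Subgroup.closure {g : Subgroup.closure (X : Set G) |
              (∃ x ∈ X, ∃ y ∈ X, (g : G) = x⁻¹ * y) ∧ g ∈ φ.ker} := by
        intro u v hu hv huc hvc h
        apply Subgroup.subset_closure
        refine ⟨⟨u, hu, v, hv, rfl⟩, ?_⟩
        rw [MonoidHom.mem_ker, map_mul, map_inv, h, inv_mul_cancel]
      refine ⟨fun a b =>
        if h : a ∈ Subgroup.closure (X : Set G) ∧ b ∈ Subgroup.closure (X : Set G)
        then cfun φ cC _ r 1 ⟨a, h.1⟩ ⟨b, h.2⟩
        else if a = 1 ∨ b = 1 ∨ a = b then 0 else 1, ?_, ?_, ?_⟩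
      · intro a b
        dsimp only
        by_cases h : a ∈ Subgroup.closure (X : Set G) ∧ b ∈ Subgroup.closure (X : Set G)
        · rw [dif_pos h]; exact cfun_mem hcC _ _ _
        · rw [dif_neg h]; split_ifs <;> norm_num
      · intro a b
        dsimp only
        by_cases h : a ∈ Subgroup.closure (X : Set G) ∧ b ∈ Subgroup.closure (X : Set G)
        · rw [dif_pos h, cfun_zero_iff hcC]
          constructor
          · rintro (h' | h' | h')
            · exact Or.inl (congrArg Subtype.val h').symm
            · exact Or.inr (Or.inl (congrArg Subtype.val h').symm)
            · exact Or.inr (Or.inr (congrArg Subtype.val h'))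
          · rintro (rfl | rfl | rfl)
            · exact Or.inl (Subtype.ext rfl)
            · exact Or.inr (Or.inl (Subtype.ext rfl))
            · exact Or.inr (Or.inr (Subtype.ext rfl))
        · rw [dif_neg h]; split_ifs with h2 <;> simp [h2]
      · intro a b e ha hb he
        dsimp only
        have haX : a ∈ X := Finset.mem_insert_of_mem ha
        have hbX : b ∈ X := Finset.mem_insert_of_mem hb
        have heX : e ∈ X := Finset.mem_insert_of_mem he
        have hac := hmem a haX; have hbc := hmem b hbX; have hec := hmem e heX
        have dab : (if h : a ∈ Subgroup.closure (X : Set G) ∧ b ∈ Subgroup.closure (X : Set G)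
            then cfun φ cC _ r 1 ⟨a, h.1⟩ ⟨b, h.2⟩
            else if a = 1 ∨ b = 1 ∨ a = b then 0 else 1) =
            cfun φ cC _ r 1 ⟨a, hac⟩ ⟨b, hbc⟩ := dif_pos ⟨hac, hbc⟩
        have dae : (if h : a ∈ Subgroup.closure (X : Set G) ∧ e ∈ Subgroup.closure (X : Set G)
            then cfun φ cC _ r 1 ⟨a, h.1⟩ ⟨e, h.2⟩
            else if a = 1 ∨ e = 1 ∨ a = e then 0 else 1) =
            cfun φ cC _ r 1 ⟨a, hac⟩ ⟨e, hec⟩ := dif_pos ⟨hac, hec⟩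
        have dbe : (if h : b ∈ Subgroup.closure (X : Set G) ∧ e ∈ Subgroup.closure (X : Set G)
            then cfun φ cC _ r 1 ⟨b, h.1⟩ ⟨e, h.2⟩
            else if b = 1 ∨ e = 1 ∨ b = e then 0 else 1) =
            cfun φ cC _ r 1 ⟨b, hbc⟩ ⟨e, hec⟩ := dif_pos ⟨hbc, hec⟩
        have dve : (if h : a⁻¹ * b ∈ Subgroup.closure (X : Set G) ∧
              a⁻¹ * e ∈ Subgroup.closure (X : Set G)
            then cfun φ cC _ r 1 ⟨a⁻¹ * b, h.1⟩ ⟨a⁻¹ * e, h.2⟩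
            else if a⁻¹ * b = 1 ∨ a⁻¹ * e = 1 ∨ a⁻¹ * b = a⁻¹ * e then 0 else 1) =
            cfun φ cC _ r 1 ((⟨a, hac⟩ : Subgroup.closure (X : Set G))⁻¹ * ⟨b, hbc⟩)
              ((⟨a, hac⟩ : Subgroup.closure (X : Set G))⁻¹ * ⟨e, hec⟩) :=
          dif_pos ⟨mul_mem (inv_mem hac) hbc, mul_mem (inv_mem hac) hec⟩
        rw [dab, dae, dbe, dve]
        have inv := cfun_inv (φ := φ) (cC := cC) (r := r) hcC
          (⟨a, hac⟩ : Subgroup.closure (X : Set G))⁻¹ ⟨a, hac⟩ ⟨b, hbc⟩ ⟨e, hec⟩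
        rw [inv_mul_cancel] at inv
        rw [inv]
        refine cfun_cocycle hcC hto hinv 1 ⟨a, hac⟩ ⟨b, hbc⟩ ⟨e, hec⟩ ?_ ?_ ?_ ?_ ?_ ?_
        · exact good 1 a h1X haX (one_mem _) hac
        · exact good 1 b h1X hbX (one_mem _) hbc
        · exact good 1 e h1X heX (one_mem _) hec
        · exact good a b haX hbX hac hbc
        · exact good a e haX heX hac hec
        · exact good b e hbX heX hbc hec
    -- Step 2: compactness via an ultrafilter on finite subsets
    choose D hD1 hD2 hD3 using key
    obtain ⟨U, hU⟩ := Ultrafilter.exists_le (Filter.atTop : Filter (Finset G))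
    have hlim : ∀ a b : G, ∃ v : ℤ, (v = 0 ∨ v = 1 ∨ v = -1) ∧
        ∀ᶠ F in (U : Filter (Finset G)), D F a b = v := by
      intro a b
      have h0 : ∀ᶠ F in (U : Filter (Finset G)),
          D F a b = 0 ∨ (D F a b = 1 ∨ D F a b = -1) :=
        Filter.Eventually.of_forall (fun F => hD1 F a b)
      rcases (Ultrafilter.eventually_or).1 h0 with h | h
      · exact ⟨0, Or.inl rfl, h⟩
      · rcases (Ultrafilter.eventually_or).1 h with h' | h'
        · exact ⟨1, Or.inr (Or.inl rfl), h'⟩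
        · exact ⟨-1, Or.inr (Or.inr rfl), h'⟩
    choose d hd0 hd1 using hlim
    have H2 : ∀ a b, d a b = 0 ↔ (a = 1 ∨ b = 1 ∨ a = b) := by
      intro a b
      obtain ⟨F, hF⟩ := (hd1 a b).exists
      rw [← hF]
      exact hD2 F a b
    refine ⟨fun x y z => d (x⁻¹ * y) (x⁻¹ * z), fun x y z => hd0 _ _, ?_, ?_, ?_⟩
    · intro x y z
      rw [H2]
      simp only [inv_mul_eq_one, mul_right_inj]
    · intro x1 x2 x3 x4
      dsimp only
      have e23 : x2⁻¹ * x3 = (x1⁻¹ * x2)⁻¹ * (x1⁻¹ * x3) := by group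
      have e24 : x2⁻¹ * x4 = (x1⁻¹ * x2)⁻¹ * (x1⁻¹ * x4) := by group
      rw [e23, e24]
      set a := x1⁻¹ * x2; set b := x1⁻¹ * x3; set e := x1⁻¹ * x4
      have hF5 : ∀ᶠ F in (U : Filter (Finset G)), a ∈ F ∧ b ∈ F ∧ e ∈ F := by
        have h6 : ∀ᶠ F in (U : Filter (Finset G)), ({a, b, e} : Finset G) ≤ F :=
          hU (Filter.eventually_ge_atTop ({a, b, e} : Finset G))
        refine h6.mono ?_
        intro F hF
        exact ⟨hF (by simp), hF (by simp), hF (by simp)⟩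
      have ev := ((hd1 a b).and ((hd1 a e).and ((hd1 b e).and
        (hd1 (a⁻¹ * b) (a⁻¹ * e))))).and hF5
      obtain ⟨F, ⟨h1, h2, h3, h4⟩, ha, hb, he⟩ := ev.exists
      rw [← h1, ← h2, ← h3, ← h4]
      exact hD3 F a b e ha hb he
    · intro g x y z
      dsimp only
      have e1 : (g * x)⁻¹ * (g * y) = x⁻¹ * y := by group
      have e2 : (g * x)⁻¹ * (g * z) = x⁻¹ * z := by group
      rw [e1, e2]
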